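/- Every SO_n-invariant polynomial f ∈ R satisfies a monic quadratic equation with O_n-invariant coefficients: there exist O_n-invariant polynomials a, b ∈ R with f² + a·f + b = 0. -/
import Mathlib

open MvPolynomial Matrix

/-- The algebra endomorphism of `R = K[x_{i,j}]` induced by the substitution `U ↦ U·A`. -/
noncomputable def sigmaAct (m n : ℕ) {K : Type*} [Field K] (A : Matrix (Fin n) (Fin n) K) :
    MvPolynomial (Fin m × Fin n) K →ₐ[K] MvPolynomial (Fin m × Fin n) K :=
  MvPolynomial.aeval fun p => ∑ k : Fin n, MvPolynomial.C (A k p.2) * MvPolynomial.X (p.1, k)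

lemma orth_mul {n : ℕ} {K : Type*} [Field K] {A B : Matrix (Fin n) (Fin n) K}
    (hA : Aᵀ * A = 1) (hB : Bᵀ * B = 1) : (A * B)ᵀ * (A * B) = 1 := by
  rw [Matrix.transpose_mul, Matrix.mul_assoc, ← Matrix.mul_assoc Aᵀ A B, hA,
    Matrix.one_mul, hB]

lemma sigmaAct_mul (m n : ℕ) {K : Type*} [Field K] (A B : Matrix (Fin n) (Fin n) K)
    (f : MvPolynomial (Fin m × Fin n) K) :
    sigmaAct m n A (sigmaAct m n B f) = sigmaAct m n (A * B) f := by
  have h : (sigmaAct m n A).comp (sigmaAct m n B) = sigmaAct m n (A * B) := by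
    apply MvPolynomial.algHom_ext
    intro p
    simp only [AlgHom.comp_apply, sigmaAct, aeval_X, map_sum, _root_.map_mul, aeval_C,
      Matrix.mul_apply, Finset.mul_sum, Finset.sum_mul, algebraMap_eq, map_sum]
    rw [Finset.sum_comm]
    apply Finset.sum_congr rfl
    intro k _
    apply Finset.sum_congr rfl
    intro l _
    rw [← mul_assoc, ← C_mul, mul_comm (B l p.2) (A k l)]
    rw [C_mul]
  calc sigmaAct m n A (sigmaAct m n B f) = ((sigmaAct m n A).comp (sigmaAct m n B)) f := rfl
    _ = sigmaAct m n (A * B) f := by rw [h]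

lemma sigmaAct_one (m n : ℕ) {K : Type*} [Field K]
    (f : MvPolynomial (Fin m × Fin n) K) : sigmaAct m n (1 : Matrix (Fin n) (Fin n) K) f = f := by
  have h : sigmaAct m n (1 : Matrix (Fin n) (Fin n) K) = AlgHom.id K _ := by
    apply MvPolynomial.algHom_ext
    intro p
    simp [sigmaAct, Matrix.one_apply]
  rw [h]; rfl

theorem soInvariant_quadratic_over_oInvariants {K : Type*} [Field K] [IsAlgClosed K]
    (hK : ringChar K ≠ 2) (m n : ℕ) (hm : 1 ≤ m) (hn : 1 ≤ n)
    (f : MvPolynomial (Fin m × Fin n) K)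
    (hf : ∀ A : Matrix (Fin n) (Fin n) K, Aᵀ * A = 1 → A.det = 1 → sigmaAct m n A f = f) :
    ∃ a b : MvPolynomial (Fin m × Fin n) K,
      (∀ A : Matrix (Fin n) (Fin n) K, Aᵀ * A = 1 → sigmaAct m n A a = a) ∧
      (∀ A : Matrix (Fin n) (Fin n) K, Aᵀ * A = 1 → sigmaAct m n A b = b) ∧
      f ^ 2 + a * f + b = 0 := by
  set D : Matrix (Fin n) (Fin n) K :=
    Matrix.diagonal (fun i => if i = ⟨0, hn⟩ then (-1 : K) else 1) with hD
  have hDsq : D * D = 1 := by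
    rw [hD, Matrix.diagonal_mul_diagonal]
    ext i j
    by_cases h : i = j
    · subst h
      by_cases h2 : i = ⟨0, hn⟩ <;> simp [Matrix.diagonal_apply_eq, Matrix.one_apply_eq, h2]
    · simp [Matrix.diagonal_apply_ne _ h, Matrix.one_apply_ne h]
  have hDT : Dᵀ = D := by rw [hD, Matrix.diagonal_transpose]
  have hDO : Dᵀ * D = 1 := by rw [hDT]; exact hDsq
  have hDdet : D.det = -1 := by
    rw [hD, Matrix.det_diagonal]
    rw [Finset.prod_eq_single (⟨0, hn⟩ : Fin n)]
    · simp
    · intro i _ hi; simp [hi]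
    · simp
  set g := sigmaAct m n D f with hg
  have hdet : ∀ A : Matrix (Fin n) (Fin n) K, Aᵀ * A = 1 → A.det = 1 ∨ A.det = -1 := by
    intro A hA
    have : A.det * A.det = 1 := by
      have := congrArg Matrix.det hA
      simpa [Matrix.det_mul, Matrix.det_transpose] using this
    rcases mul_self_eq_one_iff.mp this with h | h
    · exact Or.inl h
    · exact Or.inr h
  have key : ∀ A : Matrix (Fin n) (Fin n) K, Aᵀ * A = 1 →
      (sigmaAct m n A f = f ∧ sigmaAct m n A g = g) ∨
      (sigmaAct m n A f = g ∧ sigmaAct m n A g = f) := by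
    intro A hA
    have hAg : ∀ B : Matrix (Fin n) (Fin n) K, Bᵀ * B = 1 → B.det = 1 →
        sigmaAct m n (B * D) f = g := by
      intro B hB hBdet
      have h1 : B * D = D * (D * B * D) := by
        rw [← Matrix.mul_assoc, ← Matrix.mul_assoc, hDsq, Matrix.one_mul]
      have h2 : (D * B * D)ᵀ * (D * B * D) = 1 := orth_mul (orth_mul hDO hB) hDO
      have h3 : (D * B * D).det = 1 := by
        simp [Matrix.det_mul, hDdet, hBdet]
      rw [h1, ← sigmaAct_mul, hf _ h2 h3]
    rcases hdet A hA with h1 | h1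
    · exact Or.inl ⟨hf A hA h1, by rw [hg, sigmaAct_mul]; exact hAg A hA h1⟩
    · have hADo : (A * D)ᵀ * (A * D) = 1 := orth_mul hA hDO
      have hADdet : (A * D).det = 1 := by simp [Matrix.det_mul, hDdet, h1]
      refine Or.inr ⟨?_, ?_⟩
      · have : A = (A * D) * D := by rw [Matrix.mul_assoc, hDsq, Matrix.mul_one]
        rw [this]
        exact hAg (A * D) hADo hADdet
      · rw [hg, sigmaAct_mul]
        exact hf (A * D) hADo hADdet
  refine ⟨-(f + g), f * g, ?_, ?_, ?_⟩
  · intro A hA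
    rcases key A hA with ⟨h1, h2⟩ | ⟨h1, h2⟩ <;> simp [h1, h2, add_comm]
  · intro A hA
    rcases key A hA with ⟨h1, h2⟩ | ⟨h1, h2⟩ <;> simp [h1, h2, mul_comm]
  · ring
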